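/- Let N ≥ 2, W : {1,…,N} → ℝ, and let λ_1 < λ_2 be the two smallest eigenvalues of H_W(P_N) with unit eigenvectors u(λ_1), u(λ_2), extended by u_0(λ) = u_1(λ) and u_{N+1}(λ) = u_N(λ). Assume u_i(λ_1) > 0 for all 1 ≤ i ≤ N, that u_1(λ_2) > 0, and that the sequence (u_i(λ_2))_{i=1}^{N} has exactly one generalized zero. Then the Casoratian w_i = u_{i+1}(λ_2)·u_i(λ_1) − u_i(λ_2)·u_{i+1}(λ_1) satisfies w_i ≤ 0 for every i ∈ {0,…,N}; equivalently, the sequence (u_i(λ_2)/u_i(λ_1))_{i=0}^{N+1} is non-increasing. -/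

import Mathlib

/-- The path Schrödinger operator `H_W(P_N)`; vertex `i : Fin N` has label `i + 1`. -/
noncomputable def pathH (N : ℕ) (W : ℕ → ℝ) : Matrix (Fin N) (Fin N) ℝ :=
  Matrix.of fun i j =>
    if i = j then
      (if (i : ℕ) = 0 ∨ (i : ℕ) = N - 1 then (1 : ℝ) else 2) + W ((i : ℕ) + 1)
    else if (i : ℕ) + 1 = (j : ℕ) ∨ (j : ℕ) + 1 = (i : ℕ) then -1 else 0

/-- `μ` is an eigenvalue of the real matrix `A`. -/
def IsEigen {n : ℕ} (A : Matrix (Fin n) (Fin n) ℝ) (μ : ℝ) : Prop :=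
  ∃ v : Fin n → ℝ, v ≠ 0 ∧ A.mulVec v = μ • v

/-- `l1 < l2` are the two smallest eigenvalues of `A`. -/
def TwoSmallest {n : ℕ} (A : Matrix (Fin n) (Fin n) ℝ) (l1 l2 : ℝ) : Prop :=
  IsEigen A l1 ∧ IsEigen A l2 ∧ l1 < l2 ∧
    ∀ μ, IsEigen A μ → l1 ≤ μ ∧ (μ ≠ l1 → l2 ≤ μ)

lemma pathH_apply (N : ℕ) (W : ℕ → ℝ) (a b : ℕ) (ha : a < N) (hb : b < N) :
    pathH N W ⟨a, ha⟩ ⟨b, hb⟩ =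
      if a = b then (if a = 0 ∨ a = N - 1 then (1 : ℝ) else 2) + W (a + 1)
      else if a + 1 = b ∨ b + 1 = a then -1 else 0 := by
  simp only [pathH, Matrix.of_apply, Fin.mk.injEq]

lemma path_rec (N : ℕ) (hN : 2 ≤ N) (W : ℕ → ℝ) (lam : ℝ) (u : ℕ → ℝ)
    (hue : (pathH N W).mulVec (fun i : Fin N => u ((i : ℕ) + 1)) =
      lam • fun i : Fin N => u ((i : ℕ) + 1))
    (hl : u 0 = u 1) (hr : u (N + 1) = u N) :
    ∀ k, 1 ≤ k → k ≤ N → u (k - 1) + u (k + 1) = (2 + W k - lam) * u k := by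
  intro k hk1 hkN
  have hi : k - 1 < N := by omega
  have key := congrFun hue ⟨k - 1, hi⟩
  simp only [Matrix.mulVec, dotProduct, Pi.smul_apply, smul_eq_mul] at key
  rcases eq_or_lt_of_le hk1 with h1 | h1
  · -- k = 1
    have hk : k = 1 := h1.symm
    subst hk
    have hpt : ∀ x : Fin N, pathH N W ⟨1 - 1, hi⟩ x * u ((x : ℕ) + 1) =
        (if x = (⟨0, by omega⟩ : Fin N) then (1 + W 1) * u 1 else 0) +
        (if x = (⟨1, by omega⟩ : Fin N) then -u 2 else 0) := by
      intro x
      obtain ⟨b, hb⟩ := x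
      rw [pathH_apply]
      simp only [Fin.mk.injEq]
      split_ifs <;> subst_vars <;>
        first
          | (exfalso; ((try casesm* _ ∨ _) <;> omega))
          | (exfalso; tauto)
          | norm_num
    rw [Finset.sum_congr rfl (fun x _ => hpt x)] at key
    rw [Finset.sum_add_distrib, Finset.sum_ite_eq', Finset.sum_ite_eq'] at key
    simp only [Finset.mem_univ, if_true] at key
    norm_num at key ⊢
    rw [hl]
    linarith [key]
  rcases eq_or_lt_of_le hkN with h2 | h2
  · -- k = N
    have hk : k = N := h2
    have hpt : ∀ x : Fin N, pathH N W ⟨k - 1, hi⟩ x * u ((x : ℕ) + 1) =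
        (if x = (⟨k - 1, hi⟩ : Fin N) then (1 + W k) * u k else 0) +
        (if x = (⟨k - 2, by omega⟩ : Fin N) then -u (k - 1) else 0) := by
      intro x
      obtain ⟨b, hb⟩ := x
      rw [pathH_apply]
      simp only [Fin.mk.injEq]
      split_ifs <;> subst_vars <;>
        first
          | (exfalso; ((try casesm* _ ∨ _) <;> omega))
          | (exfalso; tauto)
          | ring1
          | (simp only [show k - 1 + 1 = k from by omega]; ring1)
          | (simp only [show k - 2 + 1 = k - 1 from by omega]; ring1)
    rw [Finset.sum_congr rfl (fun x _ => hpt x)] at key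
    rw [Finset.sum_add_distrib, Finset.sum_ite_eq', Finset.sum_ite_eq'] at key
    simp only [Finset.mem_univ, if_true] at key
    rw [show k - 1 + 1 = k by omega] at key
    rw [show k + 1 = N + 1 by omega, hr, show N = k from hk.symm]
    linarith [key]
  · -- interior
    have hpt : ∀ x : Fin N, pathH N W ⟨k - 1, hi⟩ x * u ((x : ℕ) + 1) =
        (if x = (⟨k - 1, hi⟩ : Fin N) then (2 + W k) * u k else 0) +
        ((if x = (⟨k - 2, by omega⟩ : Fin N) then -u (k - 1) else 0) +
         (if x = (⟨k, by omega⟩ : Fin N) then -u (k + 1) else 0)) := by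
      intro x
      obtain ⟨b, hb⟩ := x
      rw [pathH_apply]
      simp only [Fin.mk.injEq]
      split_ifs <;> subst_vars <;>
        first
          | (exfalso; ((try casesm* _ ∨ _) <;> omega))
          | (exfalso; tauto)
          | ring1
          | (simp only [show k - 1 + 1 = k from by omega]; ring1)
          | (simp only [show k - 2 + 1 = k - 1 from by omega]; ring1)
    rw [Finset.sum_congr rfl (fun x _ => hpt x)] at key
    rw [Finset.sum_add_distrib, Finset.sum_add_distrib,
      Finset.sum_ite_eq', Finset.sum_ite_eq', Finset.sum_ite_eq'] at key
    simp only [Finset.mem_univ, if_true] at key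
    rw [show k - 1 + 1 = k by omega] at key
    linarith [key]

/-- with `u1, u2 : ℕ → ℝ` the extended unit eigenvectors (indexed by labels
`1,…,N`, extended by `u 0 = u 1` and `u (N+1) = u N`) of the two smallest eigenvalues of
`H_W(P_N)`, with `u1` positive, `u2 1 > 0`, and `(u2 i)_{i=1}^N` having exactly one
generalized zero, the Casoratian `w_i = u2 (i+1) * u1 i - u2 i * u1 (i+1)` is `≤ 0` for
all `i ∈ {0,…,N}`; equivalently the sequence `u2 i / u1 i`, `i = 0,…,N+1`, is
non-increasing. -/
theorem path_casoratian_nonpos (N : ℕ) (hN : 2 ≤ N) (W : ℕ → ℝ)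
    (l1 l2 : ℝ) (h : TwoSmallest (pathH N W) l1 l2)
    (u1 u2 : ℕ → ℝ)
    (hu1e : (pathH N W).mulVec (fun i : Fin N => u1 ((i : ℕ) + 1)) =
      l1 • fun i : Fin N => u1 ((i : ℕ) + 1))
    (hu1n : ∑ i ∈ Finset.Icc 1 N, u1 i ^ 2 = 1)
    (hu1l : u1 0 = u1 1) (hu1r : u1 (N + 1) = u1 N)
    (hu2e : (pathH N W).mulVec (fun i : Fin N => u2 ((i : ℕ) + 1)) =
      l2 • fun i : Fin N => u2 ((i : ℕ) + 1))
    (hu2n : ∑ i ∈ Finset.Icc 1 N, u2 i ^ 2 = 1)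
    (hu2l : u2 0 = u2 1) (hu2r : u2 (N + 1) = u2 N)
    (hu1pos : ∀ i : ℕ, 1 ≤ i → i ≤ N → 0 < u1 i)
    (hu21 : 0 < u2 1)
    (hgz : ∃! m : ℕ, (1 ≤ m ∧ m ≤ N) ∧ (u2 m = 0 ∨ u2 m * u2 (m + 1) < 0)) :
    (∀ i : ℕ, i ≤ N → u2 (i + 1) * u1 i - u2 i * u1 (i + 1) ≤ 0) ∧
    (∀ i : ℕ, i ≤ N → u2 (i + 1) / u1 (i + 1) ≤ u2 i / u1 i) := by
  have hlt : l1 < l2 := h.2.2.1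
  have r1 := path_rec N hN W l1 u1 hu1e hu1l hu1r
  have r2 := path_rec N hN W l2 u2 hu2e hu2l hu2r
  set S : ℕ → ℝ := fun k => ∑ j ∈ Finset.Ioc 0 k, u1 j * u2 j with hS
  -- Casoratian identity
  have hw : ∀ k, k ≤ N → u2 (k + 1) * u1 k - u2 k * u1 (k + 1) = (l1 - l2) * S k := by
    intro k
    induction k with
    | zero =>
      intro _
      simp only [hS, Finset.Ioc_self, Finset.sum_empty, mul_zero]
      rw [hu1l, hu2l]; ring
    | succ n ih =>
      intro hn1
      have ihe := ih (by omega)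
      have h1 := r1 (n + 1) (by omega) hn1
      have h2 := r2 (n + 1) (by omega) hn1
      simp only [Nat.add_sub_cancel] at h1 h2
      have hSs : S (n + 1) = S n + u1 (n + 1) * u2 (n + 1) := by
        simp only [hS]
        rw [Finset.sum_Ioc_succ_top (Nat.zero_le n)]
      rw [hSs]
      linear_combination ihe + u1 (n + 1) * h2 - u2 (n + 1) * h1
  -- S N = 0
  have hSN : S N = 0 := by
    have hwN := hw N le_rfl
    rw [hu1r, hu2r] at hwN
    have : (l1 - l2) * S N = 0 := by linarith
    have hne : l1 - l2 ≠ 0 := by linarith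
    exact (mul_eq_zero.mp this).resolve_left hne
  obtain ⟨m, ⟨⟨hm1, hmN⟩, _hmz⟩, hmu⟩ := hgz
  -- nonnegativity up to m
  have A : ∀ i, 1 ≤ i → i ≤ m → 0 ≤ u2 i := by
    intro i hi
    induction i, hi using Nat.le_induction with
    | base => intro _; exact hu21.le
    | succ n hn ih =>
      intro hnm
      have h0 : 0 ≤ u2 n := ih (by omega)
      have hpos : 0 < u2 n := by
        rcases h0.eq_or_lt with he | hl'
        · exfalso
          have := hmu n ⟨⟨hn, by omega⟩, Or.inl he.symm⟩
          omega
        · exact hl'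
      by_contra hneg
      push_neg at hneg
      have : u2 n * u2 (n + 1) < 0 := mul_neg_of_pos_of_neg hpos hneg
      have := hmu n ⟨⟨hn, by omega⟩, Or.inr this⟩
      omega
  -- nonnegativity of partial sums
  have Snn : ∀ k, k ≤ N → 0 ≤ S k := by
    by_cases hall : ∀ i, 1 ≤ i → i ≤ N → 0 ≤ u2 i
    · intro k hk
      apply Finset.sum_nonneg
      intro j hj
      rw [Finset.mem_Ioc] at hj
      exact mul_nonneg (hu1pos j hj.1 (le_trans hj.2 hk)).le (hall j hj.1 (le_trans hj.2 hk))
    · push_neg at hall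
      obtain ⟨i0, hi01, hi0N, hi0neg⟩ := hall
      have hbase : m < N → u2 (m + 1) ≤ 0 := by
        intro hmN'
        by_contra hpos'
        push_neg at hpos'
        have C : ∀ i, m + 1 ≤ i → i ≤ N → 0 < u2 i := by
          intro i hi
          induction i, hi using Nat.le_induction with
          | base => intro _; exact hpos'
          | succ n hn ih =>
            intro hsn
            have hn' : 0 < u2 n := ih (by omega)
            rcases lt_trichotomy (u2 (n + 1)) 0 with hc | hc | hc
            · exfalso
              have : u2 n * u2 (n + 1) < 0 := mul_neg_of_pos_of_neg hn' hc
              have := hmu n ⟨⟨by omega, by omega⟩, Or.inr this⟩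
              omega
            · exfalso
              have := hmu (n + 1) ⟨⟨by omega, hsn⟩, Or.inl hc⟩
              omega
            · exact hc
        rcases le_or_gt i0 m with hcase | hcase
        · exact absurd (A i0 hi01 hcase) (not_le.mpr hi0neg)
        · exact absurd (C i0 (by omega) hi0N) (not_lt.mpr hi0neg.le)
      have B : ∀ i, m < i → i ≤ N → u2 i ≤ 0 := by
        intro i hi
        induction i, (show m + 1 ≤ i from hi) using Nat.le_induction with
        | base => intro hB; exact hbase (by omega)
        | succ n hn ih =>
          intro hsn
          have h1 : u2 n ≤ 0 := ih (by omega) (by omega)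
          have h1' : u2 n < 0 := by
            rcases h1.lt_or_eq with hl' | he
            · exact hl'
            · exfalso
              have := hmu n ⟨⟨by omega, by omega⟩, Or.inl he⟩
              omega
          by_contra hpos'
          push_neg at hpos'
          have : u2 n * u2 (n + 1) < 0 := mul_neg_of_neg_of_pos h1' hpos'
          have := hmu n ⟨⟨by omega, by omega⟩, Or.inr this⟩
          omega
      intro k hk
      rcases le_or_gt k m with hcase | hcase
      · apply Finset.sum_nonneg
        intro j hj
        rw [Finset.mem_Ioc] at hj
        exact mul_nonneg (hu1pos j hj.1 (by omega)).le (A j hj.1 (le_trans hj.2 hcase))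
      · have hsplit : S k + ∑ j ∈ Finset.Ioc k N, u1 j * u2 j = S N :=
          Finset.sum_Ioc_consecutive _ (Nat.zero_le k) hk
        have htail : ∑ j ∈ Finset.Ioc k N, u1 j * u2 j ≤ 0 := by
          apply Finset.sum_nonpos
          intro j hj
          rw [Finset.mem_Ioc] at hj
          exact mul_nonpos_of_nonneg_of_nonpos (hu1pos j (by omega) hj.2).le
            (B j (by omega) hj.2)
        rw [hSN] at hsplit
        linarith
  have main : ∀ i : ℕ, i ≤ N → u2 (i + 1) * u1 i - u2 i * u1 (i + 1) ≤ 0 := by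
    intro i hiN
    rw [hw i hiN]
    have h1 : l1 - l2 < 0 := by linarith
    have h2 := Snn i hiN
    nlinarith
  refine ⟨main, ?_⟩
  intro i hiN
  have hp1 : 0 < u1 i := by
    rcases Nat.eq_zero_or_pos i with h0 | h0
    · rw [h0, hu1l]; exact hu1pos 1 le_rfl (by omega)
    · exact hu1pos i h0 hiN
  have hp2 : 0 < u1 (i + 1) := by
    rcases eq_or_lt_of_le hiN with hNe | hNl
    · rw [hNe, hu1r]; exact hu1pos N (by omega) le_rfl
    · exact hu1pos (i + 1) (by omega) hNl
  rw [div_le_div_iff₀ hp2 hp1]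
  have := main i hiN
  linarith
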